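/- arXiv:1803.03113 — 2 statements merged into one kernel-verified Lean document; each statement's English description precedes it below -/
import Mathlib

section
/- With φ(x) = k/x^9 for x ∈ (1,∞) and φ(x) = k otherwise (k > 0), and g(x) = Σ_{m=0}^∞ 19683^{−m} φ(3^{−m}x): for every α > 0 there is no function N : ℝ \ {0} → ℝ satisfying both the reciprocal-nonic relation N(3x) = 19683·N(x) for all x and the bound |g(x) − N(x)| ≤ α·|x|^{−9} for all x ∈ ℝ \ {0}. Concretely, if |g(x)| ≤ (α+1)|x|^{−9} held for all x > 1, choosing a positive integer m with m·k > α+1 and x ∈ (1, 3^{m−1}) gives g(x) ≥ m·k/x^9 > (α+1)x^{−9}, a contradiction. -/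
theorem nonic_counterexample_nonstability
    (k : ℝ) (hk : 0 < k) (φ g : ℝ → ℝ)
    (hφ : ∀ x : ℝ, φ x = if 1 < x then k / x ^ 9 else k)
    (hg : ∀ x : ℝ, g x = ∑' m : ℕ, (1 / 19683 : ℝ) ^ m * φ (x / 3 ^ m)) :
    ∀ α > (0 : ℝ),
      ¬ ∃ N : ℝ → ℝ,
        (∀ x : ℝ, x ≠ 0 → N (3 * x) = 19683 * N x) ∧
        (∀ x : ℝ, x ≠ 0 → |g x - N x| ≤ α * |x| ^ (-9 : ℤ)) := by
  intro α hα
  rintro ⟨N, hN, hbd⟩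
  -- φ is nonnegative and bounded by k
  have hφ0 : ∀ x : ℝ, 0 ≤ φ x := by
    intro x; rw [hφ]; split
    · positivity
    · exact hk.le
  have hφk : ∀ x : ℝ, φ x ≤ k := by
    intro x; rw [hφ]; split
    · rename_i h
      exact div_le_self hk.le (one_le_pow₀ h.le)
    · exact le_rfl
  -- summability of the series defining g, for each x
  have hsum : ∀ x : ℝ, Summable (fun m : ℕ => (1 / 19683 : ℝ) ^ m * φ (x / 3 ^ m)) := by
    intro x
    apply Summable.of_nonneg_of_le
    · intro m; exact mul_nonneg (by positivity) (hφ0 _)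
    · intro m
      exact mul_le_mul_of_nonneg_left (hφk _) (by positivity)
    · exact (summable_geometric_of_lt_one (by norm_num) (by norm_num)).mul_right k
  have hsumk : Summable (fun m : ℕ => (1 / 19683 : ℝ) ^ m * k) :=
    (summable_geometric_of_lt_one (by norm_num) (by norm_num)).mul_right k
  set C : ℝ := ∑' m : ℕ, (1 / 19683 : ℝ) ^ m * k with hC
  have hg0 : ∀ x : ℝ, 0 ≤ g x := by
    intro x; rw [hg]
    exact tsum_nonneg fun m => mul_nonneg (by positivity) (hφ0 _)
  have hgC : ∀ x : ℝ, g x ≤ C := by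
    intro x; rw [hg]
    exact Summable.tsum_le_tsum (fun m => mul_le_mul_of_nonneg_left (hφk _) (by positivity))
      (hsum x) hsumk
  have hC0 : 0 ≤ C := le_trans (hg0 0) (hgC 0)
  -- iterate the functional equation
  have hNpow : ∀ x : ℝ, x ≠ 0 → ∀ n : ℕ, N (3 ^ n * x) = 19683 ^ n * N x := by
    intro x hx n
    induction n with
    | zero => simp
    | succ n ih =>
      have h3 : ((3:ℝ) ^ n * x) ≠ 0 := by positivity
      calc N (3 ^ (n+1) * x) = N (3 * (3 ^ n * x)) := by ring_nf
        _ = 19683 * N (3 ^ n * x) := hN _ h3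
        _ = 19683 ^ (n+1) * N x := by rw [ih]; ring
  -- N vanishes
  have hNzero : ∀ x : ℝ, x ≠ 0 → N x = 0 := by
    intro x hx
    have key : ∀ n : ℕ, |N x| ≤ (1 / 19683 : ℝ) ^ n * (C + α * |x| ^ (-9 : ℤ)) := by
      intro n
      have hx3 : ((3:ℝ) ^ n * x) ≠ 0 := by positivity
      have hb := hbd _ hx3
      have habs : |3 ^ n * x| = 3 ^ n * |x| := by
        rw [abs_mul, abs_of_pos (by positivity : (0:ℝ) < 3 ^ n)]
      have hxpos : 0 < |x| := abs_pos.mpr hx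
      have h3n : (1:ℝ) ≤ 3 ^ n := one_le_pow₀ (by norm_num)
      have hmono : |3 ^ n * x| ^ (-9 : ℤ) ≤ |x| ^ (-9 : ℤ) := by
        rw [habs, zpow_neg, zpow_neg]
        have e9 : ∀ a : ℝ, a ^ (9:ℤ) = a ^ (9:ℕ) := fun a => by exact_mod_cast rfl
        have hle : |x| ^ (9:ℤ) ≤ (3 ^ n * |x|) ^ (9:ℤ) := by
          rw [e9, e9]
          exact pow_le_pow_left₀ hxpos.le (by nlinarith) 9
        exact inv_anti₀ (by positivity) hle
      have hNb : |N (3 ^ n * x)| ≤ C + α * |x| ^ (-9 : ℤ) := by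
        have h1 : |N (3 ^ n * x)| ≤ |g (3 ^ n * x)| + α * |3 ^ n * x| ^ (-9 : ℤ) := by
          have := abs_sub_abs_le_abs_sub (N (3 ^ n * x)) (g (3 ^ n * x))
          rw [abs_sub_comm] at this
          linarith
        have h2 : |g (3 ^ n * x)| ≤ C := by
          rw [abs_of_nonneg (hg0 _)]; exact hgC _
        have h3 : α * |3 ^ n * x| ^ (-9 : ℤ) ≤ α * |x| ^ (-9 : ℤ) :=
          mul_le_mul_of_nonneg_left hmono hα.le
        linarith
      have heq : |N (3 ^ n * x)| = 19683 ^ n * |N x| := by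
        rw [hNpow x hx n, abs_mul, abs_of_pos (by positivity : (0:ℝ) < 19683 ^ n)]
      rw [heq] at hNb
      have h19 : (0:ℝ) < 19683 ^ n := by positivity
      calc |N x| = (1 / 19683 : ℝ) ^ n * (19683 ^ n * |N x|) := by
            rw [one_div, inv_pow]; field_simp
        _ ≤ (1 / 19683 : ℝ) ^ n * (C + α * |x| ^ (-9 : ℤ)) :=
            mul_le_mul_of_nonneg_left hNb (by positivity)
    have htend : Filter.Tendsto (fun n : ℕ => (1 / 19683 : ℝ) ^ n * (C + α * |x| ^ (-9 : ℤ)))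
        Filter.atTop (nhds 0) := by
      have := (tendsto_pow_atTop_nhds_zero_of_lt_one (by norm_num : (0:ℝ) ≤ 1/19683)
        (by norm_num)).mul_const (C + α * |x| ^ (-9 : ℤ))
      simpa using this
    have : |N x| ≤ 0 := ge_of_tendsto' htend key
    exact abs_eq_zero.mp (le_antisymm this (abs_nonneg _))
  -- choose m with α < m * k
  obtain ⟨m, hm⟩ := exists_nat_gt (α / k)
  have hmk : α < m * k := by
    rw [div_lt_iff₀ hk] at hm; linarith
  set x : ℝ := 3 ^ m with hxdef
  have hxne : x ≠ 0 := by positivity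
  have hxabs : |x| = x := abs_of_pos (by positivity)
  have hzp : ∀ a : ℝ, a ^ (-9 : ℤ) = (a ^ 9)⁻¹ := fun a => by
    rw [zpow_neg]; norm_cast
  have hxz : x ^ (-9 : ℤ) = ((19683:ℝ) ^ m)⁻¹ := by
    rw [hxdef, hzp, ← pow_mul, mul_comm, pow_mul]
    norm_num
  -- upper bound on g x from N = 0
  have hub : g x ≤ α * ((19683:ℝ) ^ m)⁻¹ := by
    have := hbd x hxne
    rw [hNzero x hxne, sub_zero, abs_of_nonneg (hg0 x), hxabs, hxz] at this
    exact this
  -- lower bound on g x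
  have hlb : (m : ℝ) * k * ((19683:ℝ) ^ m)⁻¹ ≤ g x := by
    rw [hg]
    have hterm : ∀ n ∈ Finset.range m,
        (1 / 19683 : ℝ) ^ n * φ (x / 3 ^ n) = k * ((19683:ℝ) ^ m)⁻¹ := by
      intro n hn
      have hnm : n < m := Finset.mem_range.mp hn
      have h1 : (1:ℝ) < x / 3 ^ n := by
        rw [hxdef, one_lt_div (by positivity)]
        exact pow_lt_pow_right₀ (by norm_num) hnm
      rw [hφ, if_pos h1, hxdef]
      have e1 : ((3:ℝ) ^ m / 3 ^ n) ^ 9 = 19683 ^ m / 19683 ^ n := by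
        rw [div_pow, ← pow_mul, ← pow_mul, mul_comm m 9, mul_comm n 9, pow_mul, pow_mul]
        norm_num
      rw [e1]
      field_simp
      rw [← mul_pow]; norm_num
    calc (m : ℝ) * k * ((19683:ℝ) ^ m)⁻¹
        = ∑ n ∈ Finset.range m, k * ((19683:ℝ) ^ m)⁻¹ := by
          rw [Finset.sum_const, Finset.card_range, nsmul_eq_mul]; ring
      _ = ∑ n ∈ Finset.range m, (1 / 19683 : ℝ) ^ n * φ (x / 3 ^ n) := by
          exact (Finset.sum_congr rfl hterm).symm
      _ ≤ ∑' n : ℕ, (1 / 19683 : ℝ) ^ n * φ (x / 3 ^ n) :=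
          Summable.sum_le_tsum _ (fun n _ => mul_nonneg (by positivity) (hφ0 _)) (hsum x)
  have hinv : (0:ℝ) < ((19683:ℝ) ^ m)⁻¹ := by positivity
  nlinarith [mul_lt_mul_of_pos_right hmk hinv]
end

section
/- Let x > 3^{m−1} for a positive integer m, and let ψ(t) = c/t^{10} for t > 1, ψ(t) = c otherwise (c > 0), h(x) = Σ_{n=0}^∞ 59049^{−n} ψ(3^{−n}x). Then h(x) ≥ m·c/x^{10}. Consequently, for any β > 0, the bound |h(x)| ≤ (β+1)·x^{−10} fails for all sufficiently large x once m·c > β+1. -/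
theorem decic_counterexample_lower_bound
    (m : ℕ) (hm : 0 < m) (c : ℝ) (hc : 0 < c) (ψ h : ℝ → ℝ)
    (hψ : ∀ t : ℝ, ψ t = if 1 < t then c / t ^ 10 else c)
    (hh : ∀ x : ℝ, h x = ∑' n : ℕ, (1 / 59049 : ℝ) ^ n * ψ (x / 3 ^ n)) :
    ∀ x : ℝ, x > 3 ^ (m - 1) →
      h x ≥ m * c / x ^ 10 ∧
      ∀ β > (0 : ℝ), (m : ℝ) * c > β + 1 → ¬ (|h x| ≤ (β + 1) / x ^ 10) := by
  intro x hx
  have h3 : (0:ℝ) < 3 ^ (m - 1) := by positivity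
  have hx0 : 0 < x := lt_trans h3 hx
  have hx10 : (0:ℝ) < x ^ 10 := by positivity
  have hψnn : ∀ t : ℝ, 0 ≤ ψ t := by
    intro t; rw [hψ]; split
    · positivity
    · exact hc.le
  have hψle : ∀ t : ℝ, ψ t ≤ c := by
    intro t; rw [hψ]; split
    · rename_i ht
      have h1 : (1:ℝ) ≤ t ^ 10 := one_le_pow₀ ht.le
      exact div_le_self hc.le h1
    · exact le_rfl
  have hnn : ∀ n : ℕ, 0 ≤ (1 / 59049 : ℝ) ^ n * ψ (x / 3 ^ n) := by
    intro n
    exact mul_nonneg (by positivity) (hψnn _)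
  have hsum : Summable (fun n : ℕ => (1 / 59049 : ℝ) ^ n * ψ (x / 3 ^ n)) := by
    apply Summable.of_nonneg_of_le hnn
      (fun n => mul_le_mul_of_nonneg_left (hψle _) (by positivity))
    exact (summable_geometric_of_lt_one (by norm_num) (by norm_num)).mul_right c
  have key : ∀ n ∈ Finset.range m, (1 / 59049 : ℝ) ^ n * ψ (x / 3 ^ n) = c / x ^ 10 := by
    intro n hn
    have hnm : n ≤ m - 1 := Nat.le_sub_one_of_lt (Finset.mem_range.mp hn)
    have h3n : (3:ℝ) ^ n ≤ 3 ^ (m - 1) := pow_le_pow_right₀ (by norm_num) hnm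
    have h3np : (0:ℝ) < 3 ^ n := by positivity
    have h1 : (1:ℝ) < x / 3 ^ n := (one_lt_div h3np).mpr (lt_of_le_of_lt h3n hx)
    rw [hψ, if_pos h1]
    have h59 : (59049:ℝ) = 3 ^ 10 := by norm_num
    have hxp : (x / 3 ^ n) ^ 10 = x ^ 10 / 59049 ^ n := by
      rw [div_pow, h59, ← pow_mul, Nat.mul_comm, pow_mul]
    have h59n : (59049:ℝ) ^ n ≠ 0 := by positivity
    rw [hxp, div_div_eq_mul_div, one_div, inv_pow, inv_mul_eq_div]
    field_simp
  have hsumeq : ∑ n ∈ Finset.range m, (1 / 59049 : ℝ) ^ n * ψ (x / 3 ^ n)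
      = m * c / x ^ 10 := by
    rw [Finset.sum_congr rfl key, Finset.sum_const, Finset.card_range, nsmul_eq_mul,
      mul_div_assoc]
  have hge : h x ≥ (m : ℝ) * c / x ^ 10 := by
    rw [hh x]
    calc (m : ℝ) * c / x ^ 10
        = ∑ n ∈ Finset.range m, (1 / 59049 : ℝ) ^ n * ψ (x / 3 ^ n) := hsumeq.symm
      _ ≤ ∑' n : ℕ, (1 / 59049 : ℝ) ^ n * ψ (x / 3 ^ n) :=
          Summable.sum_le_tsum _ (fun n _ => hnn n) hsum
  refine ⟨hge, ?_⟩
  intro β hβ hmc habs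
  have h1 : (β + 1) / x ^ 10 < (m : ℝ) * c / x ^ 10 := by
    gcongr
  have h2 : h x ≤ |h x| := le_abs_self _
  linarith
end
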